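/- Let k ≥ 1 be an integer, let ψ, V ∈ ℝ with 0 ≤ ψ ≤ k and V ≥ 0, and let a : ℕ → ℝ satisfy a(0) = 0 and a(j) ≥ (1 − ψ/k)·a(j−1) + (ψ/k)·V for all j = 1, …, k. Then a(k) ≥ (1 − (1 − ψ/k)^k) · V. -/

import Mathlib

/-- The recursion from the analysis of the greedy multi-channel algorithm: if
`a 0 = 0` and `a j ≥ (1 - ψ/k)·a (j-1) + (ψ/k)·V` for all `j = 1,…,k`, where `k ≥ 1`,
`0 ≤ ψ ≤ k` and `V ≥ 0`, then `a k ≥ (1 - (1 - ψ/k)^k)·V`. -/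
theorem greedy_recursion (k : ℕ) (hk : 1 ≤ k) (ψ V : ℝ)
    (hψ0 : 0 ≤ ψ) (hψk : ψ ≤ (k : ℝ)) (hV : 0 ≤ V)
    (a : ℕ → ℝ) (ha0 : a 0 = 0)
    (ha : ∀ j : ℕ, 1 ≤ j → j ≤ k →
      (1 - ψ / (k : ℝ)) * a (j - 1) + (ψ / (k : ℝ)) * V ≤ a j) :
    (1 - (1 - ψ / (k : ℝ)) ^ k) * V ≤ a k := by
  have hk0 : (0 : ℝ) < k := by exact_mod_cast hk
  set q : ℝ := 1 - ψ / k with hq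
  have hq0 : 0 ≤ q := by
    have h : ψ / k ≤ 1 := by rw [div_le_one hk0]; exact hψk
    rw [hq]; linarith
  have key : ∀ j : ℕ, j ≤ k → (1 - q ^ j) * V ≤ a j := by
    intro j
    induction j with
    | zero => intro _; simp [ha0]
    | succ n ih =>
      intro hjk
      have hn : n ≤ k := Nat.le_of_succ_le hjk
      have h1 := ha (n + 1) (Nat.le_add_left 1 n) hjk
      simp only [Nat.add_sub_cancel] at h1
      have h2 : q * ((1 - q ^ n) * V) ≤ q * a n :=
        mul_le_mul_of_nonneg_left (ih hn) hq0
      have : q * ((1 - q ^ n) * V) + (ψ / k) * V ≤ a (n + 1) :=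
        le_trans (add_le_add_left h2 ((ψ / k) * V)) h1
      have heq : q * ((1 - q ^ n) * V) + (ψ / k) * V = (1 - q ^ (n + 1)) * V := by
        have hpk : ψ / k = 1 - q := by rw [hq]; ring
        rw [hpk]; ring
      linarith [heq ▸ this]
  exact key k le_rfl
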